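/- Let n be even, r < 4, and let c be a circular r-coloring of (C_n, −). Then the winding numbers of the shortest-arc extensions of c restricted to the two components of the exact square C_n^{#2} (the odd-indexed cycle and the even-indexed cycle) have the same parity. -/

import Mathlib

open scoped Classical

/-- The representative in `[0, r)` of a point of the circle `O_r` (of circumference `r`),
i.e. the clockwise arc length from the base point `0`. -/
noncomputable def dlift (r : ℝ) (hr : 0 < r) (x : AddCircle r) : ℝ :=
  haveI : Fact (0 < r) := ⟨hr⟩
  ((AddCircle.equivIco r 0 x : Set.Ico (0 : ℝ) (0 + r)) : ℝ)

/-- The representative in `(-r/2, r/2]` of a point of the circle `O_r`: the signed length of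
the shortest arc from the base point (positive = clockwise). -/
noncomputable def slift (r : ℝ) (hr : 0 < r) (x : AddCircle r) : ℝ :=
  haveI : Fact (0 < r) := ⟨hr⟩
  ((AddCircle.equivIoc r (-(r / 2)) x : Set.Ioc (-(r / 2)) (-(r / 2) + r)) : ℝ)

/-- A mapping `c` of the vertices of the cycle `C_n` to the circle `O_r` is far-polar if for
each `i` the points `c (i-1)` and `c (i+1)` partition `O_r` into two arcs of unequal lengths
and `c i` lies strictly inside the larger arc.  Here `dlift r hr (c (i+1) - c (i-1))` is the
length of the clockwise arc from `c (i-1)` to `c (i+1)`. -/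
def FarPolarCycle (n : ℕ) (r : ℝ) (hr : 0 < r) (c : ZMod n → AddCircle r) : Prop :=
  ∀ i : ZMod n,
    dlift r hr (c (i + 1) - c (i - 1)) ≠ r / 2 ∧
    (if r / 2 < dlift r hr (c (i + 1) - c (i - 1)) then
      0 < dlift r hr (c i - c (i - 1)) ∧
        dlift r hr (c i - c (i - 1)) < dlift r hr (c (i + 1) - c (i - 1))
    else
      dlift r hr (c (i + 1) - c (i - 1)) < dlift r hr (c i - c (i - 1)))

/-- Let `n = 2m` be even, `r < 4`, and let `c` be a circular `r`-coloring of the all-negative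
cycle `(C_n, -)`.  The two components of the exact square `C_n^{#2}` are the cycles through the
odd-indexed and the even-indexed vertices; the winding number of the shortest-arc extension of
`c` on such a cycle is the integer `z` with `∑ slift = z * r`, where the sum of the signed
shortest displacements runs over the edges of the component.  These two winding numbers have
the same parity. -/
lemma slift_mem {r : ℝ} (hr : 0 < r) (x : AddCircle r) :
    slift r hr x ∈ Set.Ioc (-(r/2)) (r/2) := by
  haveI : Fact (0 < r) := ⟨hr⟩
  have h := (AddCircle.equivIoc r (-(r/2)) x).2
  have e : slift r hr x = ((AddCircle.equivIoc r (-(r/2)) x : Set.Ioc (-(r/2)) (-(r/2)+r)) : ℝ) := rfl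
  rw [e]
  exact ⟨h.1, by have := h.2; linarith⟩

lemma slift_coe {r : ℝ} (hr : 0 < r) (x : AddCircle r) :
    ((slift r hr x : ℝ) : AddCircle r) = x := by
  haveI : Fact (0 < r) := ⟨hr⟩
  exact (AddCircle.equivIoc r (-(r/2))).symm_apply_apply x

lemma norm_coe_le' {r : ℝ} (y : ℝ) : ‖((y : ℝ) : AddCircle r)‖ ≤ |y| := by
  simpa using QuotientAddGroup.norm_mk_le_norm (S := AddSubgroup.zmultiples r) (m := y)

lemma keq {r : ℝ} (hr : 0 < r) {k a : ℤ} (h1 : (a:ℝ)*r < (k:ℝ)*r) (h2 : (k:ℝ)*r < ((a:ℝ)+2)*r) :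
    k = a + 1 := by
  have h1' : a < k := by exact_mod_cast (mul_lt_mul_iff_of_pos_right hr).mp h1
  have h2' : (k:ℝ) < ((a + 2 : ℤ) : ℝ) := by push_cast; exact (mul_lt_mul_iff_of_pos_right hr).mp h2
  have : k < a + 2 := by exact_mod_cast h2'
  omega

lemma sum_split (f : ℕ → ℝ) : ∀ m : ℕ, ∑ i ∈ Finset.range (2*m), f i
    = ∑ j ∈ Finset.range m, f (2*j) + ∑ j ∈ Finset.range m, f (2*j+1)
  | 0 => by simp
  | (m+1) => by
    rw [show 2*(m+1) = (2*m+1)+1 by ring, Finset.sum_range_succ, Finset.sum_range_succ,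
      Finset.sum_range_succ (fun j => f (2*j)), Finset.sum_range_succ (fun j => f (2*j+1)),
      sum_split f m]
    ring

lemma parity_aux (m : ℕ) (r : ℝ) (hr : 0 < r) (hr4 : r < 4) (t s : ℕ → ℝ)
    (hts : ∀ i, ((s i : ℝ) : AddCircle r) = ((t i + t (i+1) : ℝ) : AddCircle r))
    (htm : ∀ i, t i ∈ Set.Ioc (-(r/2)) (r/2))
    (hsm : ∀ i, s i ∈ Set.Ioc (-(r/2)) (r/2))
    (ht1 : ∀ i, 1 ≤ |t i|)
    (htp : t (2*m) = t 0)
    (hT : ((∑ i ∈ Finset.range (2*m), t i : ℝ) : AddCircle r) = 0) :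
    ∃ K : ℤ, Even K ∧ ∑ i ∈ Finset.range (2*m), s i = K * r := by
  have hk : ∀ i, ∃ kk : ℤ, s i = t i + t (i+1) + kk * r := by
    intro i
    have h0 : ((s i - (t i + t (i+1)) : ℝ) : AddCircle r) = 0 := by
      rw [AddCircle.coe_sub, hts i, sub_self]
    obtain ⟨n, hn⟩ := (AddCircle.coe_eq_zero_iff r).mp h0
    exact ⟨n, by rw [zsmul_eq_mul] at hn; linarith⟩
  choose k hkk using hk
  set σ : ℕ → ℤ := fun i => if 0 < t i then 1 else -1 with hσ
  have hsp : ∀ i, 0 < t i → 1 ≤ t i := by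
    intro i h; have := ht1 i; rwa [abs_of_pos h] at this
  have hsn : ∀ i, ¬ 0 < t i → t i ≤ -1 := by
    intro i h; have := ht1 i; push_neg at h
    rw [abs_of_nonpos h] at this; linarith
  have hk2 : ∀ i, 2 * k i + σ i + σ (i+1) = 0 := by
    intro i
    obtain ⟨hb1, hb1'⟩ := htm i
    obtain ⟨hb2, hb2'⟩ := htm (i+1)
    obtain ⟨hb3, hb3'⟩ := hsm i
    have e : (k i : ℝ) * r = s i - t i - t (i+1) := by have := hkk i; linarith
    by_cases h1 : 0 < t i <;> by_cases h2 : 0 < t (i+1)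
    · have c1 := hsp i h1; have c2 := hsp (i+1) h2
      have : k i = -1 := by
        refine keq hr (a := -2) ?_ ?_ <;> push_cast <;> rw [e] <;> linarith
      simp only [hσ, if_pos h1, if_pos h2, this]; ring
    · have c1 := hsp i h1; have c2 := hsn (i+1) h2
      have : k i = 0 := by
        refine keq hr (a := -1) ?_ ?_ <;> push_cast <;> rw [e] <;> linarith
      simp only [hσ, if_pos h1, if_neg h2, this]; ring
    · have c1 := hsn i h1; have c2 := hsp (i+1) h2
      have : k i = 0 := by
        refine keq hr (a := -1) ?_ ?_ <;> push_cast <;> rw [e] <;> linarith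
      simp only [hσ, if_neg h1, if_pos h2, this]; ring
    · have c1 := hsn i h1; have c2 := hsn (i+1) h2
      have : k i = 1 := by
        refine keq hr (a := 0) ?_ ?_ <;> push_cast <;> rw [e] <;> linarith
      simp only [hσ, if_neg h1, if_neg h2, this]; ring
  -- shift invariance of σ-sum
  have hσp : σ (2*m) = σ 0 := by simp only [hσ, htp]
  have hσshift : ∑ i ∈ Finset.range (2*m), σ (i+1) = ∑ i ∈ Finset.range (2*m), σ i := by
    have h1 := Finset.sum_range_succ σ (2*m)
    have h2 := Finset.sum_range_succ' σ (2*m)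
    rw [h1] at h2; rw [hσp] at h2; linarith [h2]
  have htshift : ∑ i ∈ Finset.range (2*m), t (i+1) = ∑ i ∈ Finset.range (2*m), t i := by
    have h1 := Finset.sum_range_succ t (2*m)
    have h2 := Finset.sum_range_succ' t (2*m)
    rw [h1] at h2; rw [htp] at h2; linarith [h2]
  -- parity of σ-sum
  have hσeven : Even (∑ i ∈ Finset.range (2*m), σ i) := by
    have h : ∀ i, σ i = 2 * (if 0 < t i then (1:ℤ) else 0) - 1 := by
      intro i; by_cases h : 0 < t i <;> simp [hσ, h]
    rw [Finset.sum_congr rfl (fun i _ => h i), Finset.sum_sub_distrib, ← Finset.mul_sum,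
      Finset.sum_const, Finset.card_range, nsmul_eq_mul, mul_one]
    exact ⟨(∑ i ∈ Finset.range (2*m), if 0 < t i then (1:ℤ) else 0) - m, by push_cast; ring⟩
  -- parity of k-sum
  have hksum : (2:ℤ) * ∑ i ∈ Finset.range (2*m), k i
      = - (2 * ∑ i ∈ Finset.range (2*m), σ i) := by
    rw [Finset.mul_sum, Finset.sum_congr rfl (fun i (_ : i ∈ Finset.range (2*m)) =>
      show 2 * k i = -σ i - σ (i+1) by have := hk2 i; omega)]
    rw [Finset.sum_sub_distrib, Finset.sum_neg_distrib, hσshift]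
    ring
  have hkeven : Even (∑ i ∈ Finset.range (2*m), k i) := by
    have : ∑ i ∈ Finset.range (2*m), k i = - ∑ i ∈ Finset.range (2*m), σ i := by omega
    rw [this]; exact hσeven.neg
  -- total winding of t
  obtain ⟨w, hw⟩ := (AddCircle.coe_eq_zero_iff r).mp hT
  rw [zsmul_eq_mul] at hw
  refine ⟨2*w + ∑ i ∈ Finset.range (2*m), k i, ?_, ?_⟩
  · obtain ⟨a, ha⟩ := hkeven; exact ⟨w + a, by omega⟩
  · have hsum : ∑ i ∈ Finset.range (2*m), s i
        = ∑ i ∈ Finset.range (2*m), (t i + t (i+1) + k i * r) :=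
      Finset.sum_congr rfl (fun i _ => hkk i)
    rw [hsum, Finset.sum_add_distrib, Finset.sum_add_distrib, htshift, ← Finset.sum_mul]
    push_cast
    rw [← hw]
    ring

theorem windingParity_even_cycle (m : ℕ) (hm : 2 ≤ m) (r : ℝ) (hr : 0 < r) (hr4 : r < 4)
    (c : ZMod (2 * m) → AddCircle r)
    (hc : ∀ i : ZMod (2 * m), 1 ≤ dist (c i) (c (i + 1))) :
    ∃ zo ze : ℤ,
      (∑ j ∈ Finset.range m,
          slift r hr (c ((2 * j + 3 : ℕ) : ZMod (2 * m)) - c ((2 * j + 1 : ℕ) : ZMod (2 * m))))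
        = zo * r ∧
      (∑ j ∈ Finset.range m,
          slift r hr (c ((2 * j + 2 : ℕ) : ZMod (2 * m)) - c ((2 * j : ℕ) : ZMod (2 * m))))
        = ze * r ∧
      (Odd zo ↔ Odd ze) := by
  have e0 : ((2*m : ℕ) : ZMod (2*m)) = ((0 : ℕ) : ZMod (2*m)) := by
    rw [ZMod.natCast_self, Nat.cast_zero]
  have e1 : ((2*m+1 : ℕ) : ZMod (2*m)) = ((1 : ℕ) : ZMod (2*m)) := by
    rw [Nat.cast_add, ZMod.natCast_self, zero_add]
  set t : ℕ → ℝ := fun i =>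
    slift r hr (c ((i+1 : ℕ) : ZMod (2*m)) - c ((i : ℕ) : ZMod (2*m))) with htdef
  set s : ℕ → ℝ := fun i =>
    slift r hr (c ((i+2 : ℕ) : ZMod (2*m)) - c ((i : ℕ) : ZMod (2*m))) with hsdef
  -- coe of sums telescopes
  have coe_sum : ∀ (n : ℕ) (f : ℕ → ℝ),
      ((∑ i ∈ Finset.range n, f i : ℝ) : AddCircle r)
        = ∑ i ∈ Finset.range n, ((f i : ℝ) : AddCircle r) := fun n f =>
    map_sum (QuotientAddGroup.mk' (AddSubgroup.zmultiples r)) f (Finset.range n)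
  -- hypotheses of parity_aux
  have hts : ∀ i, ((s i : ℝ) : AddCircle r) = ((t i + t (i+1) : ℝ) : AddCircle r) := by
    intro i
    rw [AddCircle.coe_add, htdef, hsdef]
    simp only []
    rw [slift_coe hr, slift_coe hr, slift_coe hr]
    have : (i+1+1 : ℕ) = (i+2 : ℕ) := by omega
    rw [this]
    abel
  have htm : ∀ i, t i ∈ Set.Ioc (-(r/2)) (r/2) := fun i => slift_mem hr _
  have hsm : ∀ i, s i ∈ Set.Ioc (-(r/2)) (r/2) := fun i => slift_mem hr _
  have ht1 : ∀ i, 1 ≤ |t i| := by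
    intro i
    have h := hc ((i : ℕ) : ZMod (2*m))
    have ec : ((i : ℕ) : ZMod (2*m)) + 1 = ((i+1 : ℕ) : ZMod (2*m)) := by push_cast; ring
    rw [ec, dist_eq_norm, norm_sub_rev] at h
    have h2 := norm_coe_le' (r := r) (t i)
    rw [htdef] at h2
    simp only [] at h2
    rw [slift_coe hr] at h2
    calc (1:ℝ) ≤ _ := h
    _ ≤ |t i| := h2
  have htp : t (2*m) = t 0 := by
    rw [htdef]; simp only []
    rw [e1, e0]
  have hT : ((∑ i ∈ Finset.range (2*m), t i : ℝ) : AddCircle r) = 0 := by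
    rw [coe_sum]
    have : ∀ i ∈ Finset.range (2*m), ((t i : ℝ) : AddCircle r)
        = c ((i+1 : ℕ) : ZMod (2*m)) - c ((i : ℕ) : ZMod (2*m)) := by
      intro i _; rw [htdef]; simp only []; rw [slift_coe hr]
    rw [Finset.sum_congr rfl this,
      Finset.sum_range_sub (fun i => c ((i : ℕ) : ZMod (2*m))), e0, sub_self]
  obtain ⟨K, hKeven, hKsum⟩ := parity_aux m r hr hr4 t s hts htm hsm ht1 htp hT
  -- the two component sums
  have hzo : ∃ zo : ℤ, ∑ j ∈ Finset.range m, s (2*j+1) = zo * r := by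
    have h0 : ((∑ j ∈ Finset.range m, s (2*j+1) : ℝ) : AddCircle r) = 0 := by
      rw [coe_sum]
      have : ∀ j ∈ Finset.range m, ((s (2*j+1) : ℝ) : AddCircle r)
          = c ((2*(j+1)+1 : ℕ) : ZMod (2*m)) - c ((2*j+1 : ℕ) : ZMod (2*m)) := by
        intro j _; rw [hsdef]; simp only []; rw [slift_coe hr]
        have : (2*j+1+2 : ℕ) = (2*(j+1)+1 : ℕ) := by omega
        rw [this]
      rw [Finset.sum_congr rfl this,
        Finset.sum_range_sub (fun j => c ((2*j+1 : ℕ) : ZMod (2*m)))]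
      rw [show (2*m+1 : ℕ) = (2*m+1 : ℕ) from rfl, e1]
      rw [show (2*0+1 : ℕ) = (1 : ℕ) by omega, sub_self]
    obtain ⟨n, hn⟩ := (AddCircle.coe_eq_zero_iff r).mp h0
    exact ⟨n, by rw [← hn, zsmul_eq_mul]⟩
  have hze : ∃ ze : ℤ, ∑ j ∈ Finset.range m, s (2*j) = ze * r := by
    have h0 : ((∑ j ∈ Finset.range m, s (2*j) : ℝ) : AddCircle r) = 0 := by
      rw [coe_sum]
      have : ∀ j ∈ Finset.range m, ((s (2*j) : ℝ) : AddCircle r)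
          = c ((2*(j+1) : ℕ) : ZMod (2*m)) - c ((2*j : ℕ) : ZMod (2*m)) := by
        intro j _; rw [hsdef]; simp only []; rw [slift_coe hr]
        have : (2*j+2 : ℕ) = (2*(j+1) : ℕ) := by omega
        rw [this]
      rw [Finset.sum_congr rfl this,
        Finset.sum_range_sub (fun j => c ((2*j : ℕ) : ZMod (2*m)))]
      rw [show (2*0 : ℕ) = (0 : ℕ) by omega, e0, sub_self]
    obtain ⟨n, hn⟩ := (AddCircle.coe_eq_zero_iff r).mp h0
    exact ⟨n, by rw [← hn, zsmul_eq_mul]⟩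
  obtain ⟨zo, hzo⟩ := hzo
  obtain ⟨ze, hze⟩ := hze
  -- statement sums equal these
  have hSo : (∑ j ∈ Finset.range m,
      slift r hr (c ((2 * j + 3 : ℕ) : ZMod (2 * m)) - c ((2 * j + 1 : ℕ) : ZMod (2 * m))))
      = ∑ j ∈ Finset.range m, s (2*j+1) := by
    refine Finset.sum_congr rfl (fun j _ => ?_)
    rw [hsdef]
  have hSe : (∑ j ∈ Finset.range m,
      slift r hr (c ((2 * j + 2 : ℕ) : ZMod (2 * m)) - c ((2 * j : ℕ) : ZMod (2 * m))))
      = ∑ j ∈ Finset.range m, s (2*j) := by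
    refine Finset.sum_congr rfl (fun j _ => ?_)
    rw [hsdef]
  -- combine
  have hsplit := sum_split s m
  have hzzK : zo + ze = K := by
    have h1 : ((zo + ze : ℤ) : ℝ) * r = (K : ℤ) * r := by
      push_cast
      rw [add_mul, ← hzo, ← hze, ← hKsum, hsplit]
      ring
    have := mul_right_cancel₀ (ne_of_gt hr) h1
    exact_mod_cast this
  refine ⟨zo, ze, by rw [hSo]; exact hzo, by rw [hSe]; exact hze, ?_⟩
  have hev : Even (zo + ze) := hzzK ▸ hKeven
  rw [← Int.not_even_iff_odd, ← Int.not_even_iff_odd]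
  exact not_congr (Int.even_add.mp hev)
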